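/- Every finite recursion-free set of Horn clauses can be transformed into an equivalent body-disjoint recursion-free set by duplicating relation symbols and their defining clauses, such that any syntactic solution of the duplicated system yields a syntactic solution of the original system by taking, for each original relation symbol, the conjunction of the solutions of its copies. -/

import Mathlib

namespace Stmt12

/- Horn clauses over a constraint language.
`S` indexes the class of structures, `U s` is the universe of structure `s`,
`V` is the set of first-order variables, `Con` the constraints (interpreted
by `interp`), `Tm` the first-order terms (evaluated by `tval`), `R` the
uninterpreted relation symbols with arities `arity`, and `xvar p` the fixed
vector of argument variables of the relation symbol `p`. -/
variable {S V Con Tm R : Type} (U : S → Type)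
  (interp : Con → (s : S) → (V → U s) → Prop)
  (tval : Tm → (s : S) → (V → U s) → U s)
  (arity : R → ℕ) (xvar : (p : R) → Fin (arity p) → V)

/-- An application p(t₁,…,tₖ) of a relation symbol to terms. -/
structure HAtom (arity : R → ℕ) (Tm : Type) : Type where
  rel : R
  args : Fin (arity rel) → Tm

/-- A Horn clause C ∧ B₁ ∧ … ∧ Bₙ → H; `head = none` encodes head `false`. -/
structure Clause (Con : Type) (arity : R → ℕ) (Tm : Type) : Type where
  c : Con
  body : List (HAtom arity Tm)
  head : Option (HAtom arity Tm)

/-- Interpretation of the relation symbols in a structure s. -/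
def RelInterp (s : S) : Type _ := ∀ p : R, (Fin (arity p) → U s) → Prop

/-- A clause holds in structure s under relation interpretation ρ. -/
def ClauseHoldsSem (s : S) (ρ : RelInterp U arity s) (cl : Clause Con arity Tm) : Prop :=
  ∀ α : V → U s,
    interp cl.c s α →
    (∀ b ∈ cl.body, ρ b.rel fun i => tval (b.args i) s α) →
    (match cl.head with
      | none => False
      | some a => ρ a.rel fun i => tval (a.args i) s α)

/-- Semantic solvability: in every structure of the class there exist
relations making all clauses true. -/
def SemSolvable (HC : List (Clause Con arity Tm)) : Prop :=
  ∀ s : S, ∃ ρ : RelInterp U arity s, ∀ cl ∈ HC, ClauseHoldsSem U interp tval arity s ρ cl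

open Classical in
/-- The assignment obtained from α by overriding the argument variables
of the relation symbol of `a` with the values of the argument terms
(semantic substitution sol(p)[t̄]). -/
noncomputable def override (s : S) (α : V → U s) (a : HAtom arity Tm) : V → U s :=
  fun v => if h : ∃ i, xvar a.rel i = v then tval (a.args (Classical.choose h)) s α else α v

/-- Instantiation sol(p)[t̄] of a relation symbol assignment at an atom. -/
def instA (sol : R → Con) (s : S) (α : V → U s) (a : HAtom arity Tm) : Prop :=
  interp (sol a.rel) s (override U tval arity xvar s α a)

/-- The instantiation sol(h) of a clause h is universally valid. -/
def ClauseHoldsSyn (sol : R → Con) (cl : Clause Con arity Tm) : Prop :=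
  ∀ (s : S) (α : V → U s),
    interp cl.c s α →
    (∀ b ∈ cl.body, instA U interp tval arity xvar sol s α b) →
    (match cl.head with
      | none => False
      | some a => instA U interp tval arity xvar sol s α a)

/-- sol(p) is a constraint "in the n free variables x̄_p": its interpretation
depends only on the designated argument variables. -/
def GoodSol (sol : R → Con) : Prop :=
  ∀ p : R, ∀ (s : S) (α β : V → U s),
    (∀ i, α (xvar p i) = β (xvar p i)) → (interp (sol p) s α ↔ interp (sol p) s β)

/-- Syntactic solvability: there is an assignment of constraints to relation
symbols validating (the universal closure of) every instantiated clause in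
every structure. -/
def SynSolvable (HC : List (Clause Con arity Tm)) : Prop :=
  ∃ sol : R → Con, GoodSol U interp arity xvar sol ∧
    ∀ cl ∈ HC, ClauseHoldsSyn U interp tval arity xvar sol cl
/-- The dependence relation of HC: p →_HC q if some clause has head symbol p
and q occurring in its body. -/
def Dep (HC : List (Clause Con arity Tm)) (p q : R) : Prop :=
  ∃ cl ∈ HC, (∃ a, cl.head = some a ∧ a.rel = p) ∧ (∃ b ∈ cl.body, b.rel = q)

/-- HC is recursion-free: the dependence relation is acyclic. -/
def RecursionFree (HC : List (Clause Con arity Tm)) : Prop :=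
  ∀ p : R, ¬ Relation.TransGen (Dep arity HC) p p

/-- Derivability of a relation-symbol fact in structure s by unfolding the
clauses of HC; for recursion-free HC this captures exactly satisfiability
of the inlined definitions exp'(p(t̄)) in the expansion exp(HC). -/
inductive Deriv (HC : List (Clause Con arity Tm)) (s : S) :
    (p : R) → (Fin (arity p) → U s) → Prop where
  | step (cl : Clause Con arity Tm) (hcl : cl ∈ HC) (a : HAtom arity Tm)
      (hhead : cl.head = some a) (α : V → U s)
      (hc : interp cl.c s α)
      (hb : ∀ b ∈ cl.body, Deriv HC s b.rel fun i => tval (b.args i) s α) :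
      Deriv HC s a.rel fun i => tval (a.args i) s α

/-- Satisfiability of the expansion exp(HC): some structure and assignment
satisfy the inlined body of some clause with head false. -/
def ExpSat (HC : List (Clause Con arity Tm)) : Prop :=
  ∃ (s : S), ∃ cl ∈ HC, cl.head = none ∧
    ∃ α : V → U s, interp cl.c s α ∧
      ∀ b ∈ cl.body, Deriv U interp tval arity HC s b.rel fun i => tval (b.args i) s α
/-- HC is body-disjoint: each relation symbol occurs in the body of at most
one clause, and at most once per clause body. -/
def BodyDisjoint (HC : List (Clause Con arity Tm)) : Prop :=
  (∀ cl ∈ HC, cl.body.Pairwise fun a b => a.rel ≠ b.rel) ∧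
  (∀ cl₁ ∈ HC, ∀ cl₂ ∈ HC, ∀ b₁ ∈ cl₁.body, ∀ b₂ ∈ cl₂.body,
      b₁.rel = b₂.rel → cl₁ = cl₂)

variable {R' : Type}

/-- Rename the relation symbol of an atom along π (copies back to originals). -/
def mapAtom (π : R' → R) (a : HAtom (fun p' => arity (π p')) Tm) : HAtom arity Tm :=
  ⟨π a.rel, a.args⟩

/-- Rename all relation symbols of a clause along π. -/
def mapClause (π : R' → R) (cl : Clause Con (fun p' => arity (π p')) Tm) :
    Clause Con arity Tm :=
  ⟨cl.c, cl.body.map (mapAtom arity π), cl.head.map (mapAtom arity π)⟩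

/-! ### Auxiliary development for the duplication construction -/

section Dup

/-- Valid occurrence paths: `Valid HC p σ` says `σ` is a legitimate chain of
(clause index, body position) pairs identifying a copy of `p`. -/
def Valid (HC : List (Clause Con arity Tm)) : R → List (ℕ × ℕ) → Prop
  | _, [] => True
  | p, (i, j) :: σ =>
      ∃ cl, HC[i]? = some cl ∧ (∃ b, cl.body[j]? = some b ∧ b.rel = p) ∧
        (cl.head = none → σ = []) ∧
        (∀ a, cl.head = some a → Valid HC a.rel σ)

/-- A path is valid as the head context of a clause `cl`. -/
def HeadValid (HC : List (Clause Con arity Tm)) (cl : Clause Con arity Tm)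
    (σ : List (ℕ × ℕ)) : Prop :=
  (cl.head = none → σ = []) ∧ (∀ a, cl.head = some a → Valid arity HC a.rel σ)

theorem Valid_cons (HC : List (Clause Con arity Tm)) (p : R) (i j : ℕ)
    (σ : List (ℕ × ℕ)) :
    Valid arity HC p ((i, j) :: σ) ↔
      ∃ cl, HC[i]? = some cl ∧ (∃ b, cl.body[j]? = some b ∧ b.rel = p) ∧
        HeadValid arity HC cl σ := Iff.rfl

/-- The type of copies of relation symbols. -/
def Cop (HC : List (Clause Con arity Tm)) : Type _ :=
  {x : R × List (ℕ × ℕ) // Valid arity HC x.1 x.2}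

/-- The projection back to original symbols. -/
@[reducible] def projR (HC : List (Clause Con arity Tm)) : Cop arity HC → R :=
  fun x => x.1.1

theorem mem_of_getElem?' {α : Type*} {l : List α} {i : ℕ} {a : α}
    (h : l[i]? = some a) : a ∈ l := by
  obtain ⟨h1, h2⟩ := List.getElem?_eq_some_iff.mp h
  exact h2 ▸ List.getElem_mem h1

/-- Max body length over HC. -/
def maxBody (HC : List (Clause Con arity Tm)) : ℕ :=
  (HC.map fun cl => cl.body.length).foldr max 0

theorem body_le_maxBody {HC : List (Clause Con arity Tm)} :
    ∀ cl ∈ HC, cl.body.length ≤ maxBody arity HC := by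
  intro cl hcl
  induction HC with
  | nil => cases hcl
  | cons c t ih =>
    simp only [maxBody, List.map_cons, List.foldr_cons]
    rcases List.mem_cons.mp hcl with rfl | h
    · exact le_max_left _ _
    · exact le_trans (ih h) (le_max_right _ _)

open Classical in
/-- The head symbols of HC. -/
noncomputable def headSyms (HC : List (Clause Con arity Tm)) : Finset R :=
  (HC.filterMap fun cl => cl.head.map (·.rel)).toFinset

theorem mem_headSyms {HC : List (Clause Con arity Tm)} {cl : Clause Con arity Tm}
    {a : HAtom arity Tm} (hcl : cl ∈ HC) (h : cl.head = some a) :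
    a.rel ∈ headSyms arity HC := by
  classical
  simp only [headSyms, List.mem_toFinset, List.mem_filterMap]
  exact ⟨cl, hcl, by simp [h]⟩

theorem valid_length_le {HC : List (Clause Con arity Tm)}
    (hrf : RecursionFree arity HC) :
    ∀ (σ : List (ℕ × ℕ)) (p : R) (T : Finset R),
      Valid arity HC p σ →
      (∀ q ∈ headSyms arity HC, Relation.TransGen (Dep arity HC) q p → q ∈ T) →
      σ.length ≤ T.card + 1 := by
  classical
  intro σ
  induction σ with
  | nil => intro p T _ _; simp
  | cons x σ ih =>
    rcases x with ⟨i, j⟩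
    intro p T hv hT
    obtain ⟨cl, hcl, ⟨b, hb, hbp⟩, hn, hs⟩ := hv
    rcases hh : cl.head with _ | a
    · have : σ = [] := hn hh
      subst this; simp
    · have hva : Valid arity HC a.rel σ := hs a hh
      have hdep : Dep arity HC a.rel p :=
        ⟨cl, mem_of_getElem?' hcl, ⟨a, hh, rfl⟩, ⟨b, mem_of_getElem?' hb, hbp⟩⟩
      have haT : a.rel ∈ T :=
        hT a.rel (mem_headSyms arity (mem_of_getElem?' hcl) hh)
          (Relation.TransGen.single hdep)
      have hle : σ.length ≤ (T.erase a.rel).card + 1 := by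
        refine ih a.rel (T.erase a.rel) hva ?_
        intro q hq htg
        refine Finset.mem_erase.mpr ⟨?_, hT q hq (htg.tail hdep)⟩
        rintro rfl
        exact hrf _ htg
      have hcard : (T.erase a.rel).card = T.card - 1 :=
        Finset.card_erase_of_mem haT
      have hpos : 1 ≤ T.card := Finset.card_pos.mpr ⟨a.rel, haT⟩
      simp only [List.length_cons]
      omega

theorem valid_entries {HC : List (Clause Con arity Tm)} :
    ∀ (σ : List (ℕ × ℕ)) (p : R), Valid arity HC p σ →
      ∀ x ∈ σ, x.1 < HC.length ∧ x.2 < maxBody arity HC := by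
  intro σ
  induction σ with
  | nil => intro p _ x hx; cases hx
  | cons y σ ih =>
    rcases y with ⟨i, j⟩
    intro p hv x hx
    obtain ⟨cl, hcl, ⟨b, hb, hbp⟩, hn, hs⟩ := hv
    rcases List.mem_cons.mp hx with rfl | hx
    · constructor
      · exact (List.getElem?_eq_some_iff.mp hcl).1
      · exact lt_of_lt_of_le (List.getElem?_eq_some_iff.mp hb).1
          (body_le_maxBody arity cl (mem_of_getElem?' hcl))
    · rcases hh : cl.head with _ | a
      · rw [hn hh] at hx; cases hx
      · exact ih a.rel (hs a hh) x hx

/-- The finite superset of valid paths. -/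
def PathBound (HC : List (Clause Con arity Tm)) : Set (List (ℕ × ℕ)) :=
  {σ | σ.length ≤ (headSyms arity HC).card + 1 ∧
       ∀ x ∈ σ, x.1 < HC.length ∧ x.2 < maxBody arity HC}

theorem finite_PathBound (HC : List (Clause Con arity Tm)) :
    (PathBound arity HC).Finite := by
  classical
  set E : Set (ℕ × ℕ) := Set.Iio HC.length ×ˢ Set.Iio (maxBody arity HC) with hE
  have hEfin : E.Finite := (Set.finite_Iio _).prod (Set.finite_Iio _)
  haveI : Finite E := hEfin.to_subtype
  have hfin : {l : List E | l.length ≤ (headSyms arity HC).card + 1}.Finite :=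
    List.finite_length_le _ _
  refine Set.Finite.subset (hfin.image fun l => l.map Subtype.val) ?_
  rintro σ ⟨hlen, hmem⟩
  refine ⟨σ.pmap (fun x h => (⟨x, h⟩ : E)) ?_, ?_, ?_⟩
  · intro x hx
    exact ⟨Set.mem_Iio.mpr (hmem x hx).1, Set.mem_Iio.mpr (hmem x hx).2⟩
  · exact (List.length_pmap).le.trans hlen
  · exact (List.map_pmap _).trans (List.pmap_eq_self.mpr fun _ _ => rfl)

theorem valid_mem_PathBound {HC : List (Clause Con arity Tm)}
    (hrf : RecursionFree arity HC) {p : R} {σ : List (ℕ × ℕ)}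
    (hv : Valid arity HC p σ) : σ ∈ PathBound arity HC :=
  ⟨valid_length_le arity hrf σ p _ hv (fun q hq _ => hq), valid_entries arity σ p hv⟩

theorem fiber_finite {HC : List (Clause Con arity Tm)}
    (hrf : RecursionFree arity HC) (p : R) :
    (projR arity HC ⁻¹' {p}).Finite := by
  have himg : (fun x : Cop arity HC => x.1.2) '' (projR arity HC ⁻¹' {p}) ⊆
      PathBound arity HC := by
    rintro σ ⟨x, _, rfl⟩
    exact valid_mem_PathBound arity hrf x.2
  refine Set.Finite.of_finite_image ((finite_PathBound arity HC).subset himg) ?_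
  rintro ⟨⟨q1, σ1⟩, h1⟩ hx ⟨⟨q2, σ2⟩, h2⟩ hy (heq : σ1 = σ2)
  have hq1 : q1 = p := hx
  have hq2 : q2 = p := hy
  subst heq hq1
  cases hq2
  rfl

/-- The j-th body atom of a clause copy. -/
def copyAtom (HC : List (Clause Con arity Tm)) (i : ℕ) (cl : Clause Con arity Tm)
    (hcl : HC[i]? = some cl) (σ : List (ℕ × ℕ)) (hv : HeadValid arity HC cl σ)
    (j : Fin cl.body.length) : HAtom (fun x : Cop arity HC => arity x.1.1) Tm where
  rel := ⟨((cl.body.get j).rel, (i, (j : ℕ)) :: σ),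
    ⟨cl, hcl, ⟨cl.body.get j, by simp, rfl⟩, hv.1, hv.2⟩⟩
  args := (cl.body.get j).args

/-- The copy of a clause at head context σ. -/
def copyAt (HC : List (Clause Con arity Tm)) (i : ℕ) (cl : Clause Con arity Tm)
    (hcl : HC[i]? = some cl) (σ : List (ℕ × ℕ)) (hv : HeadValid arity HC cl σ) :
    Clause Con (fun x : Cop arity HC => arity x.1.1) Tm where
  c := cl.c
  body := (List.finRange cl.body.length).map (copyAtom arity HC i cl hcl σ hv)
  head := match hh : cl.head with
    | none => none
    | some a => some { rel := ⟨(a.rel, σ), hv.2 a hh⟩, args := a.args }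

theorem mem_copyAt_body {HC : List (Clause Con arity Tm)} {i : ℕ}
    {cl : Clause Con arity Tm} {hcl : HC[i]? = some cl} {σ : List (ℕ × ℕ)}
    {hv : HeadValid arity HC cl σ} {b' : HAtom (fun x : Cop arity HC => arity x.1.1) Tm} :
    b' ∈ (copyAt arity HC i cl hcl σ hv).body ↔
      ∃ j : Fin cl.body.length, b' = copyAtom arity HC i cl hcl σ hv j := by
  simp only [copyAt, List.mem_map, List.mem_finRange, true_and]
  exact ⟨fun ⟨j, h⟩ => ⟨j, h.symm⟩, fun ⟨j, h⟩ => ⟨j, h.symm⟩⟩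

theorem copyAt_head_none {HC : List (Clause Con arity Tm)} {i : ℕ}
    {cl : Clause Con arity Tm} (hcl : HC[i]? = some cl) (σ : List (ℕ × ℕ))
    (hv : HeadValid arity HC cl σ) (hh : cl.head = none) :
    (copyAt arity HC i cl hcl σ hv).head = none := by
  rcases cl with ⟨c, bd, hd⟩
  cases hh
  rfl

theorem copyAt_head_some {HC : List (Clause Con arity Tm)} {i : ℕ}
    {cl : Clause Con arity Tm} (hcl : HC[i]? = some cl) (σ : List (ℕ × ℕ))
    (hv : HeadValid arity HC cl σ) {a : HAtom arity Tm} (hh : cl.head = some a) :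
    (copyAt arity HC i cl hcl σ hv).head =
      some ⟨⟨(a.rel, σ), hv.2 a hh⟩, a.args⟩ := by
  rcases cl with ⟨c, bd, hd⟩
  cases hh
  rfl

theorem mapClause_copyAt {HC : List (Clause Con arity Tm)} {i : ℕ}
    {cl : Clause Con arity Tm} (hcl : HC[i]? = some cl) (σ : List (ℕ × ℕ))
    (hv : HeadValid arity HC cl σ) :
    mapClause arity (projR arity HC) (copyAt arity HC i cl hcl σ hv) = cl := by
  have hb : (mapClause arity (projR arity HC) (copyAt arity HC i cl hcl σ hv)).body
      = cl.body := by
    show ((List.finRange cl.body.length).map (copyAtom arity HC i cl hcl σ hv)).map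
        (mapAtom arity (projR arity HC)) = cl.body
    rw [List.map_map]
    exact (List.map_congr_left fun j _ => rfl).trans (List.map_get_finRange cl.body)
  have hh : (mapClause arity (projR arity HC) (copyAt arity HC i cl hcl σ hv)).head
      = cl.head := by
    show ((copyAt arity HC i cl hcl σ hv).head).map (mapAtom arity (projR arity HC))
        = cl.head
    rcases hd : cl.head with _ | a
    · rw [copyAt_head_none arity hcl σ hv hd]; rfl
    · rw [copyAt_head_some arity hcl σ hv hd]; rfl
  rcases cl with ⟨c, bd, hd⟩
  rcases hcq : mapClause arity (projR arity HC) (copyAt arity HC i ⟨c, bd, hd⟩ hcl σ hv)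
    with ⟨c', bd', hd'⟩
  rw [hcq] at hb hh
  have hc : c' = c := by
    have : (mapClause arity (projR arity HC)
        (copyAt arity HC i ⟨c, bd, hd⟩ hcl σ hv)).c = c := rfl
    rw [hcq] at this; exact this
  simp_all

/-- The set of (clause index, head context) pairs. -/
def PairSet (HC : List (Clause Con arity Tm)) : Set (ℕ × List (ℕ × ℕ)) :=
  {x | ∃ cl, HC[x.1]? = some cl ∧ HeadValid arity HC cl x.2}

theorem finite_PairSet {HC : List (Clause Con arity Tm)}
    (hrf : RecursionFree arity HC) : (PairSet arity HC).Finite := by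
  refine Set.Finite.subset ((Set.finite_Iio HC.length).prod
    ((finite_PathBound arity HC).insert [])) ?_
  rintro ⟨i, σ⟩ ⟨cl, hcl, hv⟩
  refine ⟨(List.getElem?_eq_some_iff.mp hcl).1, ?_⟩
  rcases hh : cl.head with _ | a
  · rw [hv.1 hh]; exact Set.mem_insert _ _
  · exact Set.mem_insert_of_mem _ (valid_mem_PathBound arity hrf (hv.2 a hh))

open Classical in
/-- The duplicated clause set. -/
noncomputable def dupHC (HC : List (Clause Con arity Tm))
    (hrf : RecursionFree arity HC) :
    List (Clause Con (fun x : Cop arity HC => arity x.1.1) Tm) :=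
  (finite_PairSet arity hrf).toFinset.toList.filterMap fun x =>
    match h : HC[x.1]? with
    | none => none
    | some cl =>
      if hv : HeadValid arity HC cl x.2 then some (copyAt arity HC x.1 cl h x.2 hv)
      else none

theorem mem_dupHC {HC : List (Clause Con arity Tm)} {hrf : RecursionFree arity HC}
    {cl' : Clause Con (fun x : Cop arity HC => arity x.1.1) Tm} :
    cl' ∈ dupHC arity HC hrf ↔
      ∃ (i : ℕ) (cl : Clause Con arity Tm) (hcl : HC[i]? = some cl)
        (σ : List (ℕ × ℕ)) (hv : HeadValid arity HC cl σ),
        cl' = copyAt arity HC i cl hcl σ hv := by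
  unfold dupHC
  rw [List.mem_filterMap]
  constructor
  · rintro ⟨⟨i, σ⟩, _, hstep⟩
    dsimp only at hstep
    split at hstep
    · cases hstep
    · rename_i cl h
      split at hstep
      · rename_i hv
        exact ⟨i, cl, h, σ, hv, (Option.some.inj hstep).symm⟩
      · cases hstep
  · rintro ⟨i, cl, hcl, σ, hv, rfl⟩
    refine ⟨(i, σ), ?_, ?_⟩
    · rw [Finset.mem_toList, Set.Finite.mem_toFinset]
      exact ⟨cl, hcl, hv⟩
    · dsimp only
      split
      · rename_i h; rw [hcl] at h; cases h
      · rename_i cl2 h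
        have hc2 : cl2 = cl := by rw [hcl] at h; exact (Option.some.inj h).symm
        subst hc2
        rw [dif_pos hv]

theorem dep_dup_length {HC : List (Clause Con arity Tm)} {hrf : RecursionFree arity HC}
    {x y : Cop arity HC}
    (h : Dep (fun x : Cop arity HC => arity x.1.1) (dupHC arity HC hrf) x y) :
    y.1.2.length = x.1.2.length + 1 := by
  obtain ⟨cl', hmem, ⟨a', hhd, hrel⟩, ⟨b', hb, hbrel⟩⟩ := h
  obtain ⟨i, cl, hcl, σ, hv, rfl⟩ := (mem_dupHC arity).mp hmem
  rcases hh : cl.head with _ | a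
  · rw [copyAt_head_none arity hcl σ hv hh] at hhd; cases hhd
  · rw [copyAt_head_some arity hcl σ hv hh] at hhd
    obtain rfl := Option.some.inj hhd
    obtain ⟨j, rfl⟩ := (mem_copyAt_body arity).mp hb
    subst hrel hbrel
    rfl

theorem recFree_dup {HC : List (Clause Con arity Tm)} (hrf : RecursionFree arity HC) :
    RecursionFree (fun x : Cop arity HC => arity x.1.1) (dupHC arity HC hrf) := by
  intro p hp
  have key : ∀ x y : Cop arity HC,
      Relation.TransGen (Dep (fun x : Cop arity HC => arity x.1.1) (dupHC arity HC hrf)) x y →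
      x.1.2.length < y.1.2.length := by
    intro x y h
    induction h with
    | single h => rw [dep_dup_length arity h]; omega
    | tail _ h2 ih => rw [dep_dup_length arity h2]; omega
  exact absurd (key p p hp) (lt_irrefl _)

theorem bodyDisjoint_dup {HC : List (Clause Con arity Tm)}
    (hrf : RecursionFree arity HC) :
    BodyDisjoint (fun x : Cop arity HC => arity x.1.1) (dupHC arity HC hrf) := by
  constructor
  · intro cl' hmem
    obtain ⟨i, cl, hcl, σ, hv, rfl⟩ := (mem_dupHC arity).mp hmem
    show ((List.finRange cl.body.length).map (copyAtom arity HC i cl hcl σ hv)).Pairwise _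
    refine List.Pairwise.map _ ?_ (List.nodup_finRange cl.body.length)
    intro j1 j2 hne heq
    apply hne
    have := congrArg Prod.snd (congrArg Subtype.val heq)
    simp only [copyAtom] at this
    exact Fin.ext (by simpa using this)
  · intro cl1 hmem1 cl2 hmem2 b1 hb1 b2 hb2 hrel
    obtain ⟨i1, cla, hcla, σ1, hv1, rfl⟩ := (mem_dupHC arity).mp hmem1
    obtain ⟨i2, clb, hclb, σ2, hv2, rfl⟩ := (mem_dupHC arity).mp hmem2
    obtain ⟨j1, rfl⟩ := (mem_copyAt_body arity).mp hb1
    obtain ⟨j2, rfl⟩ := (mem_copyAt_body arity).mp hb2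
    have hval := congrArg Prod.snd (congrArg Subtype.val hrel)
    simp only [copyAtom] at hval
    obtain ⟨hij, hσ⟩ := List.cons.inj hval
    have hi : i1 = i2 := congrArg Prod.fst hij
    subst hi hσ
    have hc : cla = clb := by rw [hcla] at hclb; exact Option.some.inj hclb
    subst hc
    rfl

theorem headValid_of_none {HC : List (Clause Con arity Tm)} {cl : Clause Con arity Tm}
    (hh : cl.head = none) : HeadValid arity HC cl [] :=
  ⟨fun _ => rfl, fun a ha => by rw [hh] at ha; cases ha⟩

theorem headValid_of_some {HC : List (Clause Con arity Tm)} {cl : Clause Con arity Tm}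
    {a : HAtom arity Tm} (hh : cl.head = some a) {σ : List (ℕ × ℕ)}
    (hval : Valid arity HC a.rel σ) : HeadValid arity HC cl σ :=
  ⟨fun h0 => (by rw [hh] at h0; cases h0),
   fun a' ha' => (by rw [hh] at ha'; cases ha'; exact hval)⟩

theorem semSolvable_dup {HC : List (Clause Con arity Tm)} (hrf : RecursionFree arity HC) :
    SemSolvable U interp tval (fun x : Cop arity HC => arity x.1.1) (dupHC arity HC hrf) ↔
      SemSolvable U interp tval arity HC := by
  constructor
  · intro h s
    obtain ⟨ρ', hρ'⟩ := h s
    refine ⟨fun p v => ∀ (x : Cop arity HC) (hx : x.1.1 = p),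
      ρ' x (fun i => v (Fin.cast (congrArg arity hx) i)), ?_⟩
    intro cl hcl α hc hb
    obtain ⟨i, hi⟩ := List.mem_iff_getElem?.mp hcl
    have bodyprem : ∀ (σ : List (ℕ × ℕ)) (hv : HeadValid arity HC cl σ),
        ∀ b' ∈ (copyAt arity HC i cl hi σ hv).body,
          ρ' b'.rel fun k => tval (b'.args k) s α := by
      intro σ hv b' hb'
      obtain ⟨j, rfl⟩ := (mem_copyAt_body arity).mp hb'
      exact hb (cl.body.get j) (List.get_mem cl.body j) _ rfl
    rcases hh : cl.head with _ | a
    · have hv : HeadValid arity HC cl [] := headValid_of_none arity hh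
      have hres := hρ' _ ((mem_dupHC arity).mpr ⟨i, cl, hi, [], hv, rfl⟩) α hc
        (bodyprem [] hv)
      rw [copyAt_head_none arity hi [] hv hh] at hres
      exact hres
    · rintro ⟨⟨q, σ⟩, hval⟩ hx
      dsimp only at hx
      subst hx
      have hv : HeadValid arity HC cl σ := headValid_of_some arity hh hval
      have hres := hρ' _ ((mem_dupHC arity).mpr ⟨i, cl, hi, σ, hv, rfl⟩) α hc
        (bodyprem σ hv)
      rw [copyAt_head_some arity hi σ hv hh] at hres
      exact hres
  · intro h s
    obtain ⟨ρ, hρ⟩ := h s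
    refine ⟨fun x v => ρ x.1.1 v, ?_⟩
    intro cl' hmem α hc hb
    obtain ⟨i, cl, hcl, σ, hv, rfl⟩ := (mem_dupHC arity).mp hmem
    have hthis := hρ cl (mem_of_getElem?' hcl) α hc ?_
    · rcases hh : cl.head with _ | a
      · rw [hh] at hthis
        rw [copyAt_head_none arity hcl σ hv hh]
        exact hthis
      · rw [hh] at hthis
        rw [copyAt_head_some arity hcl σ hv hh]
        exact hthis
    · intro b hbmem
      obtain ⟨j, rfl⟩ := List.mem_iff_get.mp hbmem
      exact hb (copyAtom arity HC i cl hcl σ hv j) ((mem_copyAt_body arity).mpr ⟨j, rfl⟩)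

theorem transfer_dup {HC : List (Clause Con arity Tm)} (hrf : RecursionFree arity HC)
    (sol' : Cop arity HC → Con)
    (hgood : GoodSol U interp (fun x : Cop arity HC => arity x.1.1)
      (fun x : Cop arity HC => xvar x.1.1) sol')
    (hsolve : ∀ cl' ∈ dupHC arity HC hrf,
      ClauseHoldsSyn U interp tval (fun x : Cop arity HC => arity x.1.1)
        (fun x : Cop arity HC => xvar x.1.1) sol' cl')
    (sol : R → Con)
    (hspec : ∀ (p : R) (s : S) (α : V → U s),
      interp (sol p) s α ↔ ∀ x : Cop arity HC, x.1.1 = p → interp (sol' x) s α) :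
    GoodSol U interp arity xvar sol ∧
      ∀ cl ∈ HC, ClauseHoldsSyn U interp tval arity xvar sol cl := by
  constructor
  · intro p s α β hagree
    rw [hspec, hspec]
    constructor
    · rintro hall ⟨⟨q, σ⟩, hval⟩ hx
      dsimp only at hx; subst hx
      exact (hgood ⟨(q, σ), hval⟩ s α β hagree).mp (hall _ rfl)
    · rintro hall ⟨⟨q, σ⟩, hval⟩ hx
      dsimp only at hx; subst hx
      exact (hgood ⟨(q, σ), hval⟩ s α β hagree).mpr (hall _ rfl)
  · intro cl hcl s α hc hbody
    obtain ⟨i, hi⟩ := List.mem_iff_getElem?.mp hcl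
    have bodyprem : ∀ (σ : List (ℕ × ℕ)) (hv : HeadValid arity HC cl σ),
        ∀ b' ∈ (copyAt arity HC i cl hi σ hv).body,
          instA U interp tval (fun x : Cop arity HC => arity x.1.1)
            (fun x : Cop arity HC => xvar x.1.1) sol' s α b' := by
      intro σ hv b' hb'
      obtain ⟨j, rfl⟩ := (mem_copyAt_body arity).mp hb'
      have hbj := hbody (cl.body.get j) (List.get_mem cl.body j)
      exact (hspec _ s _).mp hbj (copyAtom arity HC i cl hi σ hv j).rel rfl
    rcases hh : cl.head with _ | a
    · have hv : HeadValid arity HC cl [] := headValid_of_none arity hh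
      have hres := hsolve _ ((mem_dupHC arity).mpr ⟨i, cl, hi, [], hv, rfl⟩) s α hc
        (bodyprem [] hv)
      rw [copyAt_head_none arity hi [] hv hh] at hres
      exact hres
    · show instA U interp tval arity xvar sol s α a
      rw [instA, hspec]
      rintro ⟨⟨q, σ⟩, hval⟩ hx
      dsimp only at hx; subst hx
      have hv : HeadValid arity HC cl σ := headValid_of_some arity hh hval
      have hres := hsolve _ ((mem_dupHC arity).mpr ⟨i, cl, hi, σ, hv, rfl⟩) s α hc
        (bodyprem σ hv)
      rw [copyAt_head_some arity hi σ hv hh] at hres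
      exact hres

end Dup

/-- every finite recursion-free set of Horn clauses can be
transformed into an equivalent body-disjoint recursion-free set by
duplicating relation symbols (π maps the fresh copies back to the originals)
and their defining clauses, such that any syntactic solution sol' of the
duplicated system yields a syntactic solution of the original system by
taking for each relation symbol the conjunction of the solutions of all its
copies. -/
theorem stmt12 (HC : List (Clause Con arity Tm))
    (hrf : RecursionFree arity HC) :
    ∃ (R' : Type) (π : R' → R) (HC' : List (Clause Con (fun p' => arity (π p')) Tm)),
      -- π : finitely many, at least one, copies of each relation symbol
      (∀ p : R, (π ⁻¹' {p}).Finite ∧ (π ⁻¹' {p}).Nonempty) ∧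
      -- every clause of HC' is a copy of a clause of HC
      (∀ cl' ∈ HC', mapClause arity π cl' ∈ HC) ∧
      RecursionFree (fun p' => arity (π p')) HC' ∧
      BodyDisjoint (fun p' => arity (π p')) HC' ∧
      -- the two systems are equivalent (w.r.t. semantic solvability)
      (SemSolvable U interp tval (fun p' => arity (π p')) HC' ↔
        SemSolvable U interp tval arity HC) ∧
      -- solution transfer: conjunctions of the copies solve the original system
      (∀ sol' : R' → Con,
        GoodSol U interp (fun p' => arity (π p')) (fun p' => xvar (π p')) sol' →
        (∀ cl' ∈ HC',
          ClauseHoldsSyn U interp tval (fun p' => arity (π p')) (fun p' => xvar (π p')) sol' cl') →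
        ∀ sol : R → Con,
          (∀ (p : R) (s : S) (α : V → U s),
            interp (sol p) s α ↔ ∀ p' : R', π p' = p → interp (sol' p') s α) →
          (GoodSol U interp arity xvar sol ∧
            ∀ cl ∈ HC, ClauseHoldsSyn U interp tval arity xvar sol cl)) := by
  refine ⟨Cop arity HC, projR arity HC, dupHC arity HC hrf, ?_, ?_, recFree_dup arity hrf,
    bodyDisjoint_dup arity hrf, semSolvable_dup U interp tval arity hrf, ?_⟩
  · intro p
    refine ⟨fiber_finite arity hrf p, ⟨⟨(p, []), ?_⟩, rfl⟩⟩
    show True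
    trivial
  · intro cl' h
    obtain ⟨i, cl, hcl, σ, hv, rfl⟩ := (mem_dupHC arity).mp h
    rw [mapClause_copyAt arity hcl σ hv]
    exact mem_of_getElem?' hcl
  · intro sol' hgood hsolve sol hspec
    exact transfer_dup U interp tval arity xvar hrf sol' hgood hsolve sol hspec

end Stmt12
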